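/- arXiv:1801.00113 — 8 statements merged into one kernel-verified Lean document; each statement's English description precedes it below -/
import Mathlib

section
/- If m + n ≤ 4 (with m ≥ 2, n ≥ 1), then a group G is a T(m,n)-group if and only if G is abelian. -/
/-- `G` is a `T(m,n)`-group: for every `m` subsets of `G` of cardinality `n`,
there exist distinct indices `i ≠ j` and commuting elements `x ∈ Xᵢ`, `y ∈ Xⱼ`. -/
def IsTGroup (G : Type*) [Group G] (m n : ℕ) : Prop :=
  ∀ X : Fin m → Finset G, (∀ i, (X i).card = n) →
    ∃ i j, i ≠ j ∧ ∃ x ∈ X i, ∃ y ∈ X j, x * y = y * x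

lemma aux1 {G : Type*} [Group G] {a b : G} (h : a * (a * b) = (a * b) * a) :
    a * b = b * a := mul_left_cancel (h.trans (mul_assoc a b a))

lemma aux2 {G : Type*} [Group G] {a b : G} (h : a * (b * a) = (b * a) * a) :
    a * b = b * a := mul_right_cancel ((mul_assoc a b a).trans h)

lemma aux3 {G : Type*} [Group G] {a b : G} (h : b * (a * b) = (a * b) * b) :
    a * b = b * a := (mul_right_cancel ((mul_assoc b a b).trans h)).symm

lemma aux4 {G : Type*} [Group G] {a b : G} (h : b * (b * a) = (b * a) * b) :
    a * b = b * a := (mul_left_cancel (h.trans (mul_assoc b a b))).symm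

theorem stmt_0 (G : Type*) [Group G] (m n : ℕ) (hm : 2 ≤ m) (hn : 1 ≤ n)
    (hmn : m + n ≤ 4) :
    IsTGroup G m n ↔ ∀ a b : G, a * b = b * a := by
  classical
  constructor
  · intro hT a b
    by_contra hab
    have hne : a ≠ b := fun h => hab (by rw [h])
    have hm3 : m ≤ 3 := by omega
    interval_cases m
    · -- m = 2
      have hn2 : n ≤ 2 := by omega
      interval_cases n
      · -- n = 1
        obtain ⟨i, j, hij, x, hx, y, hy, hxy⟩ :=
          hT ![{a}, {b}] (by intro i; fin_cases i <;> simp)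
        fin_cases i <;> fin_cases j <;> simp_all
      · -- n = 2
        obtain ⟨i, j, hij, x, hx, y, hy, hxy⟩ :=
          hT ![{a, b}, {a * b, b * a}] (by
            intro i; fin_cases i <;>
              simp [Finset.card_pair, hne, hab])
        fin_cases i <;> fin_cases j <;> simp_all <;>
          rcases hx with rfl | rfl <;> rcases hy with rfl | rfl <;>
            first
              | exact hab (aux1 hxy)
              | exact hab (aux2 hxy)
              | exact hab (aux3 hxy)
              | exact hab (aux4 hxy)
              | exact hab (aux1 hxy.symm)
              | exact hab (aux2 hxy.symm)
              | exact hab (aux3 hxy.symm)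
              | exact hab (aux4 hxy.symm)
    · -- m = 3, n = 1
      have hn2 : n ≤ 1 := by omega
      interval_cases n
      obtain ⟨i, j, hij, x, hx, y, hy, hxy⟩ :=
        hT ![{a}, {b}, {a * b}] (by intro i; fin_cases i <;> simp)
      fin_cases i <;> fin_cases j <;> simp_all <;>
        first
          | exact hab (aux1 hxy)
          | exact hab (aux3 hxy)
          | exact hab (aux1 hxy.symm)
          | exact hab (aux3 hxy.symm)
  · intro hcomm X hX
    refine ⟨⟨0, by omega⟩, ⟨1, by omega⟩, by simp [Fin.ext_iff], ?_⟩
    obtain ⟨x, hx⟩ := Finset.card_pos.mp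
      (by rw [hX ⟨0, by omega⟩]; omega : 0 < (X ⟨0, by omega⟩).card)
    obtain ⟨y, hy⟩ := Finset.card_pos.mp
      (by rw [hX ⟨1, by omega⟩]; omega : 0 < (X ⟨1, by omega⟩).card)
    exact ⟨x, hx, y, hy, hcomm x y⟩
end

section
/- If G is a finite group not a T(m,n)-group with m·n = |G| − |Z(G)|, then every non-central element a of G satisfies |C_G(a)| ≤ n + |Z(G)|, and hence the order of a is at most n + |Z(G)|. -/
theorem stmt_5 (G : Type*) [Group G] [Finite G] (m n : ℕ) (hm : 2 ≤ m) (hn : 1 ≤ n)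
    (h : ¬ IsTGroup G m n)
    (heq : m * n = Nat.card G - Nat.card (Subgroup.center G))
    (a : G) (ha : a ∉ Subgroup.center G) :
    Nat.card (Subgroup.centralizer {a}) ≤ n + Nat.card (Subgroup.center G) ∧
      orderOf a ≤ n + Nat.card (Subgroup.center G) := by
  classical
  cases nonempty_fintype G
  set Z : Finset G := (Subgroup.center G : Set G).toFinset with hZdef
  set C : Finset G := (Subgroup.centralizer {a} : Set G).toFinset with hCdef
  have hcardZ : Nat.card (Subgroup.center G) = Z.card := by
    rw [hZdef, ← Set.ncard_eq_toFinset_card', ← Nat.card_coe_set_eq]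
    rfl
  have hcardC : Nat.card (Subgroup.centralizer {a}) = C.card := by
    rw [hCdef, ← Set.ncard_eq_toFinset_card', ← Nat.card_coe_set_eq]
    rfl
  have hZC : Z ⊆ C := by
    intro z hz
    simp only [hZdef, hCdef, Set.mem_toFinset, SetLike.mem_coe] at *
    exact Subgroup.center_le_centralizer {a} hz
  have key : C.card ≤ n + Z.card := by
    by_contra hlt
    push_neg at hlt
    apply h
    intro X hX
    by_cases hcent : ∃ i, ∃ z ∈ X i, z ∈ Z
    · obtain ⟨i, z, hzX, hzZ⟩ := hcent
      have hzc : z ∈ Subgroup.center G := by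
        simpa [hZdef, Set.mem_toFinset] using hzZ
      obtain ⟨j, hij⟩ : ∃ j : Fin m, j ≠ i := by
        rcases Decidable.eq_or_ne i ⟨0, by omega⟩ with h0 | h0
        · exact ⟨⟨1, by omega⟩, by simp [h0, Fin.ext_iff]⟩
        · exact ⟨⟨0, by omega⟩, fun hc => h0 hc.symm⟩
      obtain ⟨y, hy⟩ : (X j).Nonempty := Finset.card_pos.mp (by rw [hX j]; omega)
      exact ⟨i, j, hij.symm, z, hzX, y, hy, (Subgroup.mem_center_iff.mp hzc y).symm⟩
    · push_neg at hcent
      by_cases hdisj : ∃ i j, i ≠ j ∧ ∃ x, x ∈ X i ∧ x ∈ X j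
      · obtain ⟨i, j, hij, x, h1, h2⟩ := hdisj
        exact ⟨i, j, hij, x, h1, x, h2, rfl⟩
      · push_neg at hdisj
        set U : Finset G := Finset.univ.biUnion X with hUdef
        have hUcard : U.card = m * n := by
          rw [hUdef, Finset.card_biUnion]
          · simp [hX, Finset.sum_const, mul_comm]
          · intro i _ j _ hij
            rw [Function.onFun, Finset.disjoint_left]
            exact fun x hx => hdisj i j hij x hx
        have hUsub : U ⊆ Zᶜ := by
          intro x hx
          rw [Finset.mem_compl]
          obtain ⟨i, _, hxi⟩ := Finset.mem_biUnion.mp hx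
          exact hcent i x hxi
        have hZccard : Zᶜ.card = m * n := by
          rw [Finset.card_compl, ← hcardZ, heq, Nat.card_eq_fintype_card]
          rw [Nat.card_eq_fintype_card]
        have hUeq : U = Zᶜ :=
          Finset.eq_of_subset_of_card_le hUsub (by omega)
        have haU : a ∈ U := by
          rw [hUeq, Finset.mem_compl]
          simpa [hZdef, Set.mem_toFinset] using ha
        obtain ⟨i₀, _, hai₀⟩ := Finset.mem_biUnion.mp haU
        set S : Finset G := C \ Z with hSdef
        have hScard : n < S.card := by
          rw [hSdef, Finset.card_sdiff_of_subset hZC]; omega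
        have hSsub : S ⊆ U := by
          rw [hUeq]
          intro x hx
          rw [Finset.mem_compl]
          exact (Finset.mem_sdiff.mp hx).2
        obtain ⟨y, hyS, hyni⟩ : ∃ y ∈ S, y ∉ X i₀ := by
          by_contra hc
          push_neg at hc
          have : S.card ≤ n := hX i₀ ▸ Finset.card_le_card hc
          omega
        obtain ⟨j, _, hyj⟩ := Finset.mem_biUnion.mp (hSsub hyS)
        have hji : j ≠ i₀ := fun hc => hyni (hc ▸ hyj)
        have hyc : y ∈ Subgroup.centralizer ({a} : Set G) := by
          have := (Finset.mem_sdiff.mp hyS).1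
          simpa [hCdef, Set.mem_toFinset] using this
        have hcomm : a * y = y * a :=
          Subgroup.mem_centralizer_iff.mp hyc a rfl
        exact ⟨i₀, j, hji.symm, a, hai₀, y, hyj, hcomm⟩
  constructor
  · rw [hcardC, hcardZ]; omega
  · have h1 : Subgroup.zpowers a ≤ Subgroup.centralizer {a} := by
      intro x hx
      obtain ⟨k, rfl⟩ := Subgroup.mem_zpowers_iff.mp hx
      exact Subgroup.mem_centralizer_iff.mpr (by
        rintro g rfl
        exact ((Commute.refl g).zpow_right k).eq)
    calc orderOf a = Nat.card (Subgroup.zpowers a) := (Nat.card_zpowers a).symm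
      _ ≤ Nat.card (Subgroup.centralizer {a}) := Subgroup.card_le_of_le h1
      _ ≤ n + Nat.card (Subgroup.center G) := by rw [hcardC, hcardZ]; omega
end

section
/- If G is a non-abelian T(2,n)-group or T(3,n)-group and N is a normal subgroup of G such that G/N is non-abelian, then |N| < n. -/
private lemma no_commute_aux {G : Type*} [Group G] (N : Subgroup G) [N.Normal] {u v : G}
    (h : (u : G ⧸ N) * (v : G ⧸ N) ≠ (v : G ⧸ N) * (u : G ⧸ N)) {a b : G}
    (ha : a ∈ N) (hb : b ∈ N) : u * a * (v * b) ≠ v * b * (u * a) := by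
  intro he
  apply h
  have := congrArg (QuotientGroup.mk (s := N)) he
  have h1 : (a : G ⧸ N) = 1 := (QuotientGroup.eq_one_iff a).mpr ha
  have h2 : (b : G ⧸ N) = 1 := (QuotientGroup.eq_one_iff b).mpr hb
  simpa [QuotientGroup.mk_mul, h1, h2] using this

private lemma main_aux {G : Type*} [Group G] (N : Subgroup G) [N.Normal] {m n : ℕ}
    (u : Fin m → G)
    (hu : ∀ i j, i ≠ j → (u i : G ⧸ N) * (u j : G ⧸ N) ≠ (u j : G ⧸ N) * (u i : G ⧸ N))
    (T : Finset G) (hT : ↑T ⊆ (N : Set G)) (hcard : T.card = n)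
    (h : IsTGroup G m n) : False := by
  classical
  obtain ⟨i, j, hij, a, ha, b, hb, hab⟩ := h (fun i => T.image (u i * ·)) (fun i => by
    rw [Finset.card_image_of_injective _ (mul_right_injective _), hcard])
  simp only [Finset.mem_image] at ha hb
  obtain ⟨s, hs, rfl⟩ := ha
  obtain ⟨t, ht, rfl⟩ := hb
  exact no_commute_aux N (hu i j hij) (hT hs) (hT ht) hab

theorem stmt_11 (G : Type*) [Group G] (n : ℕ) (hn : 1 ≤ n)
    (hT : IsTGroup G 2 n ∨ IsTGroup G 3 n)
    (hG : ∃ a b : G, a * b ≠ b * a)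
    (N : Subgroup G) [N.Normal]
    (hQ : ∃ a b : G ⧸ N, a * b ≠ b * a) :
    Finite N ∧ Nat.card N < n := by
  obtain ⟨p, q, hpq⟩ := hQ
  obtain ⟨x, rfl⟩ := QuotientGroup.mk_surjective p
  obtain ⟨y, rfl⟩ := QuotientGroup.mk_surjective q
  have h01 : (x : G ⧸ N) * y ≠ (y : G ⧸ N) * x := hpq
  have h02 : (x : G ⧸ N) * (x * y : G) ≠ ((x * y : G) : G ⧸ N) * x := by
    intro h
    apply h01
    have : (x : G ⧸ N) * ((x : G ⧸ N) * y) = (x : G ⧸ N) * y * x := by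
      simpa [QuotientGroup.mk_mul] using h
    rw [mul_assoc] at this
    exact mul_left_cancel this
  have h12 : (y : G ⧸ N) * (x * y : G) ≠ ((x * y : G) : G ⧸ N) * y := by
    intro h
    apply h01
    have : (y : G ⧸ N) * ((x : G ⧸ N) * y) = (x : G ⧸ N) * y * y := by
      simpa [QuotientGroup.mk_mul] using h
    rw [← mul_assoc] at this
    exact (mul_right_cancel this).symm
  -- key claim: no subset of N of size n
  have key : ∀ T : Finset G, ↑T ⊆ (N : Set G) → T.card ≠ n := by
    intro T hTsub hTcard
    rcases hT with h2 | h3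
    · exact main_aux N ![x, y]
        (by
          intro i j hij
          fin_cases i <;> fin_cases j <;> simp_all <;>
            first
              | exact h01
              | exact fun h => h01 h.symm) T hTsub hTcard h2
    · exact main_aux N ![x, y, x * y]
        (by
          intro i j hij
          fin_cases i <;> fin_cases j <;> simp_all <;>
            first
              | exact h01
              | exact fun h => h01 h.symm
              | exact h02
              | exact fun h => h02 h.symm
              | exact h12
              | exact fun h => h12 h.symm) T hTsub hTcard h3
  by_cases hf : (N : Set G).Finite
  · have hfin : Finite N := hf.to_subtype
    refine ⟨hfin, ?_⟩
    by_contra hlt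
    push_neg at hlt
    have hcard : Nat.card N = hf.toFinset.card := by
      have h0 : Nat.card N = Nat.card (N : Set G) := rfl
      rw [h0, Nat.card_coe_set_eq, Set.ncard_eq_toFinset_card _ hf]
    obtain ⟨T, hTsub, hTcard⟩ := Finset.exists_subset_card_eq (s := hf.toFinset) (n := n)
      (by omega)
    exact key T (fun g hg => by
      have := hTsub hg
      simpa using (hf.mem_toFinset.mp this)) hTcard
  · obtain ⟨T, hTsub, hTcard⟩ := (Set.Infinite.exists_subset_card_eq hf n)
    exact absurd hTcard (key T hTsub)
end

section
/- Every infinite T(m,n)-group with m ≤ 3 is abelian. -/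
open Finset
open scoped Pointwise

private lemma ramsey_pair {α : Type*} {r : α → α → Prop} (hsymm : Symmetric r) :
    ∀ s t : ℕ, ∃ R : ℕ, ∀ S : Finset α, R ≤ S.card →
      (∃ T ⊆ S, s ≤ T.card ∧ (T : Set α).Pairwise r) ∨
      (∃ T ⊆ S, t ≤ T.card ∧ (T : Set α).Pairwise fun a b => ¬ r a b) := by
  intro s
  induction s with
  | zero =>
    exact fun t => ⟨0, fun S _ => Or.inl ⟨∅, empty_subset _, le_refl 0, by simp⟩⟩
  | succ s ihs =>
    intro t
    induction t with
    | zero => exact ⟨0, fun S _ => Or.inr ⟨∅, empty_subset _, le_refl 0, by simp⟩⟩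
    | succ t iht =>
      obtain ⟨R1, hR1⟩ := ihs (t + 1)
      obtain ⟨R2, hR2⟩ := iht
      classical
      refine ⟨R1 + R2 + 1, fun S hS => ?_⟩
      obtain ⟨a, ha⟩ : S.Nonempty := card_pos.mp (by omega)
      have hcard' : R1 + R2 ≤ (S.erase a).card := by
        have := Finset.card_erase_of_mem ha; omega
      have hsplit := Finset.card_filter_add_card_filter_not
        (s := S.erase a) (p := fun x => r a x)
      by_cases hA : R1 ≤ ((S.erase a).filter (fun x => r a x)).card
      · rcases hR1 _ hA with ⟨T, hTsub, hTcard, hTp⟩ | ⟨T, hTsub, hTcard, hTp⟩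
        · have hTS : T ⊆ S.erase a := hTsub.trans (filter_subset _ _)
          have haT : a ∉ T := fun haT => Finset.notMem_erase a S (hTS haT)
          refine Or.inl ⟨insert a T, Finset.insert_subset ha (hTS.trans (erase_subset _ _)),
            ?_, ?_⟩
          · rw [Finset.card_insert_of_notMem haT]; omega
          · rw [Finset.coe_insert]
            exact (haveI : Std.Symm r := ⟨fun _ _ h => hsymm h⟩; Set.pairwise_insert_of_symm).mpr
              ⟨hTp, fun b hb _ => (Finset.mem_filter.mp (hTsub hb)).2⟩
        · exact Or.inr ⟨T, (hTsub.trans (filter_subset _ _)).trans (erase_subset _ _),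
            hTcard, hTp⟩
      · have hB : R2 ≤ ((S.erase a).filter (fun x => ¬ r a x)).card := by omega
        rcases hR2 _ hB with ⟨T, hTsub, hTcard, hTp⟩ | ⟨T, hTsub, hTcard, hTp⟩
        · exact Or.inl ⟨T, (hTsub.trans (filter_subset _ _)).trans (erase_subset _ _),
            hTcard, hTp⟩
        · have hTS : T ⊆ S.erase a := hTsub.trans (filter_subset _ _)
          have haT : a ∉ T := fun haT => Finset.notMem_erase a S (hTS haT)
          refine Or.inr ⟨insert a T, Finset.insert_subset ha (hTS.trans (erase_subset _ _)),
            ?_, ?_⟩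
          · rw [Finset.card_insert_of_notMem haT]; omega
          · rw [Finset.coe_insert]
            exact (haveI : Std.Symm (fun a b => ¬ r a b) := ⟨fun x y hxy hr => hxy (hsymm hr)⟩
              Set.pairwise_insert_of_symm (r := fun a b => ¬ r a b)).mpr
              ⟨hTp, fun b hb _ => (Finset.mem_filter.mp (hTsub hb)).2⟩

private lemma split_finset {G : Type*} [DecidableEq G] (n : ℕ) :
    ∀ (m : ℕ) (S : Finset G), m * n ≤ S.card →
      ∃ X : Fin m → Finset G, (∀ i, X i ⊆ S) ∧ (∀ i, (X i).card = n) ∧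
        ∀ i j, i ≠ j → Disjoint (X i) (X j) := by
  intro m
  induction m with
  | zero => exact fun S _ => ⟨fun i => i.elim0, fun i => i.elim0, fun i => i.elim0,
      fun i => i.elim0⟩
  | succ m ih =>
    intro S hS
    have hS' : m * n + n ≤ S.card := by rw [← Nat.succ_mul]; exact hS
    obtain ⟨A, hAS, hAcard⟩ := Finset.exists_subset_card_eq (s := S) (n := n) (by omega)
    obtain ⟨X', h1, h2, h3⟩ := ih (S \ A) (by rw [card_sdiff_of_subset hAS]; omega)
    refine ⟨Fin.cons A X', ?_, ?_, ?_⟩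
    · refine Fin.cases ?_ ?_
      · simpa using hAS
      · intro i; simpa using (h1 i).trans sdiff_subset
    · refine Fin.cases ?_ ?_
      · simpa using hAcard
      · intro i; simpa using h2 i
    · refine Fin.cases ?_ ?_
      · refine Fin.cases ?_ ?_
        · intro hne; exact absurd rfl hne
        · intro j _
          simp only [Fin.cons_zero, Fin.cons_succ]
          exact disjoint_of_subset_right (h1 j) disjoint_sdiff
      · intro i
        refine Fin.cases ?_ ?_
        · intro _
          simp only [Fin.cons_zero, Fin.cons_succ]
          exact disjoint_of_subset_left (h1 i) sdiff_disjoint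
        · intro j hne
          simp only [Fin.cons_succ]
          exact h3 i j (fun e => hne (by rw [e]))

theorem stmt_14 (G : Type*) [Group G] [Infinite G] (m n : ℕ) (hm2 : 2 ≤ m)
    (hm : m ≤ 3) (hn : 1 ≤ n) (h : IsTGroup G m n) :
    ∀ a b : G, a * b = b * a := by
  classical
  by_contra hab
  push_neg at hab
  obtain ⟨a, b, hab⟩ := hab
  set r : G → G → Prop := fun u v => ¬ u * v = v * u with hrdef
  have hrsymm : Symmetric r := fun u v hg e => hg e.symm
  have hmn : 2 ≤ m * n := le_trans hm2 (Nat.le_mul_of_pos_right m hn)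
  -- Step 1: no set of `m * n` pairwise non-commuting elements
  have hclique : ∀ S : Finset G, (S : Set G).Pairwise r → S.card < m * n := by
    intro S hS
    by_contra hcard
    push_neg at hcard
    obtain ⟨X, hXS, hXcard, hXdisj⟩ := split_finset n m S hcard
    obtain ⟨i, j, hij, x, hx, y, hy, hxy⟩ := h X hXcard
    have hne : x ≠ y := fun e =>
      Finset.disjoint_left.mp (hXdisj i j hij) hx (e ▸ hy)
    exact hS (hXS i hx) (hXS j hy) hne hxy
  -- Step 2 (Ramsey): every large enough finset contains n pairwise commuting elements
  obtain ⟨R, hR⟩ := ramsey_pair hrsymm (m * n) n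
  have hbig : ∀ S : Finset G, R ≤ S.card → ∃ T : Finset G, T ⊆ S ∧ n ≤ T.card ∧
      (T : Set G).Pairwise (fun u v => u * v = v * u) := by
    intro S hS
    rcases hR S hS with ⟨T, h1, h2, h3⟩ | ⟨T, h1, h2, h3⟩
    · exact absurd (hclique T h3) (by omega)
    · exact ⟨T, h1, h2, fun u hu v hv huv => not_not.mp (h3 hu hv huv)⟩
  -- Step 3: a maximal clique of pairwise non-commuting elements
  set P : ℕ → Prop := fun k => ∃ S : Finset G, S.card = k ∧ (S : Set G).Pairwise r with hPdef
  have habne : a ≠ b := fun e => hab (e ▸ rfl)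
  have hP2 : P 2 := by
    refine ⟨{a, b}, Finset.card_pair habne, ?_⟩
    intro x hx y hy hxy
    simp only [Finset.coe_insert, Finset.coe_singleton, Set.mem_insert_iff,
      Set.mem_singleton_iff] at hx hy
    rcases hx with rfl | rfl <;> rcases hy with rfl | rfl
    · exact absurd rfl hxy
    · exact hab
    · exact hrsymm hab
    · exact absurd rfl hxy
  set k0 := Nat.findGreatest P (m * n) with hk0
  have hPk0 : P k0 := Nat.findGreatest_spec hmn hP2
  have hk02 : 2 ≤ k0 := Nat.le_findGreatest hmn hP2
  obtain ⟨C, hCcard, hCp⟩ := hPk0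
  have hk0lt : k0 < m * n := hCcard ▸ hclique C hCp
  have hnot : ¬ P (k0 + 1) :=
    Nat.findGreatest_is_greatest (Nat.lt_succ_self k0) (by omega)
  -- Step 4: the centralizers of the maximal clique cover G
  have hcov : ∀ g : G, ∃ c ∈ C, g * c = c * g := by
    intro g
    by_contra hg
    push_neg at hg
    have hgC : g ∉ C := fun hgC => hg g hgC rfl
    refine hnot ⟨insert g C, by rw [Finset.card_insert_of_notMem hgC, hCcard], ?_⟩
    rw [Finset.coe_insert]
    exact (haveI : Std.Symm r := ⟨fun _ _ h => hrsymm h⟩; Set.pairwise_insert_of_symm).mpr ⟨hCp, fun c hc _ => hg c hc⟩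
  have hcovers : ⋃ c ∈ C, (fun _ : G => (1 : G)) c •
      ((Subgroup.centralizer {c} : Subgroup G) : Set G) = Set.univ := by
    ext g
    simp only [Set.mem_iUnion, Set.mem_univ, iff_true, one_smul]
    obtain ⟨c, hc, hgc⟩ := hcov g
    exact ⟨c, hc, Subgroup.mem_centralizer_singleton_iff.mpr hgc⟩
  have hfilter := Subgroup.leftCoset_cover_filter_FiniteIndex
    (H := fun c : G => Subgroup.centralizer {c}) (g := fun _ : G => (1 : G)) hcovers
  set F := C.filter (fun c : G => (Subgroup.centralizer {c}).FiniteIndex) with hF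
  have hmemF : ∀ g : G, ∃ c ∈ F, g ∈ Subgroup.centralizer {c} := by
    intro g
    have hg : g ∈ ⋃ c ∈ F, (fun _ : G => (1 : G)) c •
        ((Subgroup.centralizer {c} : Subgroup G) : Set G) := by
      rw [hfilter]; trivial
    simp only [Set.mem_iUnion, one_smul] at hg
    obtain ⟨c, hc, hgc⟩ := hg
    exact ⟨c, hc, hgc⟩
  obtain ⟨u, huF, -⟩ := hmemF 1
  -- Step 5: two distinct non-commuting elements with finite-index centralizers
  have hexv : ∃ v ∈ F, v ≠ u := by
    by_contra hv
    push_neg at hv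
    have hucentral : ∀ g : G, g * u = u * g := by
      intro g
      obtain ⟨c, hcF, hgc⟩ := hmemF g
      rw [hv c hcF] at hgc
      exact Subgroup.mem_centralizer_singleton_iff.mp hgc
    have huC : u ∈ C := Finset.mem_of_mem_filter u huF
    obtain ⟨w, hwC, hwne⟩ : ∃ w ∈ C, w ≠ u := by
      by_contra hw
      push_neg at hw
      have hsub : C ⊆ {u} := fun x hx => Finset.mem_singleton.mpr (hw x hx)
      have := Finset.card_le_card hsub
      simp only [Finset.card_singleton] at this
      omega
    exact hCp (Finset.mem_coe.mpr hwC) (Finset.mem_coe.mpr huC) hwne (hucentral w)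
  obtain ⟨v, hvF, hvu⟩ := hexv
  have huC : u ∈ C := Finset.mem_of_mem_filter u huF
  have hvC : v ∈ C := Finset.mem_of_mem_filter v hvF
  have huFI : (Subgroup.centralizer ({u} : Set G)).FiniteIndex := (Finset.mem_filter.mp huF).2
  have hvFI : (Subgroup.centralizer ({v} : Set G)).FiniteIndex := (Finset.mem_filter.mp hvF).2
  have huv : ¬ u * v = v * u := hrsymm (hCp (Finset.mem_coe.mpr hvC) (Finset.mem_coe.mpr huC) hvu)
  set K := Subgroup.centralizer ({u} : Set G) ⊓ Subgroup.centralizer ({v} : Set G) with hK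
  haveI := huFI
  haveI := hvFI
  haveI hKFI : K.FiniteIndex := inferInstance
  -- K is infinite
  have hKinf : ((K : Set G)).Infinite := by
    have h0 : K.index * Nat.card K = Nat.card G := Subgroup.index_mul_card K
    have hGcard : Nat.card G = 0 := Nat.card_eq_zero_of_infinite
    have hKcard : Nat.card K = 0 := by
      rcases Nat.mul_eq_zero.mp (h0.trans hGcard) with h' | h'
      · exact absurd h' hKFI.index_ne_zero
      · exact h'
    have : Infinite K := (Nat.card_eq_zero.mp hKcard).resolve_left (not_isEmpty_of_nonempty _)
    exact Set.infinite_coe_iff.mp this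
  -- pick n pairwise commuting elements of K
  obtain ⟨T0, hT0K, hT0card⟩ := hKinf.exists_subset_card_eq R
  obtain ⟨T1, hT1, hT1card, hT1p⟩ := hbig T0 hT0card.ge
  obtain ⟨T, hTT1, hTcard⟩ := Finset.exists_subset_card_eq (s := T1) (n := n) hT1card
  have hTp : (T : Set G).Pairwise (fun x y => x * y = y * x) :=
    hT1p.mono (Finset.coe_subset.mpr hTT1)
  have hTK : ∀ c ∈ T, c ∈ K := fun c hc => hT0K (hT1 (hTT1 hc))
  -- the base points u, v, u*v
  set bmap : Fin m → G := fun i => if (i : ℕ) = 0 then u else if (i : ℕ) = 1 then v else u * v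
    with hbmap
  have huuv : ¬ u * (u * v) = (u * v) * u := fun e =>
    huv (mul_left_cancel (a := u) (by rw [e, mul_assoc]))
  have hvuv : ¬ v * (u * v) = (u * v) * v := fun e => by
    rw [← mul_assoc] at e
    exact huv (mul_right_cancel e).symm
  have hbnc : ∀ i j : Fin m, i ≠ j → ¬ bmap i * bmap j = bmap j * bmap i := by
    intro i j hij
    have hine : (i : ℕ) ≠ (j : ℕ) := fun e => hij (Fin.ext e)
    have hi3 : (i : ℕ) < 3 := lt_of_lt_of_le i.isLt hm
    have hj3 : (j : ℕ) < 3 := lt_of_lt_of_le j.isLt hm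
    have hi : (i : ℕ) = 0 ∨ (i : ℕ) = 1 ∨ (i : ℕ) = 2 := by omega
    have hj : (j : ℕ) = 0 ∨ (j : ℕ) = 1 ∨ (j : ℕ) = 2 := by omega
    rcases hi with hi | hi | hi <;> rcases hj with hj | hj | hj <;>
        simp only [hbmap, hi, hj] <;> norm_num <;>
        first
          | exact absurd (hi.trans hj.symm) hine
          | exact huv
          | exact fun e => huv e.symm
          | exact huuv
          | exact fun e => huuv e.symm
          | exact hvuv
          | exact fun e => hvuv e.symm
  -- elements of T commute with all base points
  have hcomm : ∀ c ∈ T, ∀ i : Fin m, c * bmap i = bmap i * c := by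
    intro c hc i
    obtain ⟨hcu', hcv'⟩ := Subgroup.mem_inf.mp (hTK c hc)
    have hcu : Commute c u := Subgroup.mem_centralizer_singleton_iff.mp hcu'
    have hcv : Commute c v := Subgroup.mem_centralizer_singleton_iff.mp hcv'
    simp only [hbmap]
    split_ifs
    · exact hcu
    · exact hcv
    · exact hcu.mul_right hcv
  -- the final contradiction
  set X : Fin m → Finset G := fun i => T.image (fun c => bmap i * c) with hX
  have hXcard : ∀ i, (X i).card = n := by
    intro i
    rw [hX]
    simp only
    rw [Finset.card_image_of_injective _ (mul_right_injective (bmap i))]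
    exact hTcard
  obtain ⟨i, j, hij, x, hx, y, hy, hxy⟩ := h X hXcard
  rw [hX] at hx hy
  simp only at hx hy
  obtain ⟨c, hc, rfl⟩ := Finset.mem_image.mp hx
  obtain ⟨d, hd, rfl⟩ := Finset.mem_image.mp hy
  have hcd : c * d = d * c := by
    by_cases hcd' : c = d
    · rw [hcd']
    · exact hTp (Finset.mem_coe.mpr hc) (Finset.mem_coe.mpr hd) hcd'
  have e1 : (bmap i * c) * (bmap j * d) = (bmap i * bmap j) * (c * d) := by
    calc (bmap i * c) * (bmap j * d) = bmap i * (c * (bmap j * d)) := mul_assoc _ _ _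
      _ = bmap i * ((c * bmap j) * d) := by rw [mul_assoc c]
      _ = bmap i * ((bmap j * c) * d) := by rw [hcomm c hc j]
      _ = (bmap i * bmap j) * (c * d) := by rw [mul_assoc (bmap j), ← mul_assoc]
  have e2 : (bmap j * d) * (bmap i * c) = (bmap j * bmap i) * (d * c) := by
    calc (bmap j * d) * (bmap i * c) = bmap j * (d * (bmap i * c)) := mul_assoc _ _ _
      _ = bmap j * ((d * bmap i) * c) := by rw [mul_assoc d]
      _ = bmap j * ((bmap i * d) * c) := by rw [hcomm d hd i]
      _ = (bmap j * bmap i) * (d * c) := by rw [mul_assoc (bmap i), ← mul_assoc]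
  have e3 : (bmap i * bmap j) * (c * d) = (bmap j * bmap i) * (c * d) := by
    rw [← e1, hxy, e2, ← hcd]
  exact hbnc i j hij (mul_right_cancel e3)
end

section
/- Let G be a finite T(4,n)-group with n > 1 such that every prime p ≤ n does not divide |G|. Then G is abelian. -/
section Aux

variable {G : Type*} [Group G] [Finite G] {n : ℕ}

private lemma ord_gt (hp : ∀ p : ℕ, p.Prime → p ≤ n → ¬ p ∣ Nat.card G)
    {a : G} (ha : a ≠ 1) : n < orderOf a := by
  have h1 : orderOf a ≠ 1 := by simpa using ha
  have hpf := Nat.minFac_prime h1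
  have hdvd : (orderOf a).minFac ∣ Nat.card G :=
    dvd_trans (Nat.minFac_dvd _) (orderOf_dvd_natCard a)
  have h2 : ¬ (orderOf a).minFac ≤ n := fun hle => hp _ hpf hle hdvd
  have h3 : (orderOf a).minFac ≤ orderOf a := Nat.minFac_le (orderOf_pos a)
  omega

private lemma cop (hp : ∀ p : ℕ, p.Prime → p ≤ n → ¬ p ∣ Nat.card G)
    {a : G} (ha : a ≠ 1) {i : ℕ} (hi1 : 1 ≤ i) (hin : i ≤ n) :
    Nat.Coprime i (orderOf a) := by
  by_contra hc
  obtain ⟨p, hpp, hpd⟩ := Nat.exists_prime_and_dvd hc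
  have hpi : p ∣ i := hpd.trans (Nat.gcd_dvd_left _ _)
  have hpo : p ∣ orderOf a := hpd.trans (Nat.gcd_dvd_right _ _)
  have : p ≤ i := Nat.le_of_dvd (by omega) hpi
  exact hp p hpp (this.trans hin) (hpo.trans (orderOf_dvd_natCard a))

private lemma key (hp : ∀ p : ℕ, p.Prime → p ≤ n → ¬ p ∣ Nat.card G)
    (a c : G) {i : ℕ} (hi1 : 1 ≤ i) (hin : i ≤ n)
    (h : Commute (a ^ i) c) : Commute a c := by
  rcases eq_or_ne a 1 with rfl | ha
  · exact Commute.one_left c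
  have hord : 1 < orderOf a := lt_of_le_of_lt hi1 (lt_of_le_of_lt hin (ord_gt hp ha))
  obtain ⟨k, -, hk⟩ := Nat.exists_mul_mod_eq_one_of_coprime (cop hp ha hi1 hin) hord
  have hmm : a ^ (i * k) = a ^ 1 := by
    rw [pow_inj_mod, hk, Nat.mod_eq_of_lt hord]
  have hak : (a ^ i) ^ k = a := by rw [← pow_mul, hmm, pow_one]
  simpa [hak] using h.pow_left k

private lemma cancel_left {a b c : G} (h1 : Commute a b) (h2 : Commute a (b * c)) :
    Commute a c := by
  simpa [inv_mul_cancel_left] using h1.inv_right.mul_right h2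

private lemma cancel_right {a b c : G} (h1 : Commute a c) (h2 : Commute a (b * c)) :
    Commute a b := by
  simpa [mul_inv_cancel_right] using h2.mul_right h1.inv_right

end Aux

theorem stmt_15 (G : Type*) [Group G] [Finite G] (n : ℕ) (hn : 1 < n)
    (h : IsTGroup G 4 n)
    (hp : ∀ p : ℕ, p.Prime → p ≤ n → ¬ p ∣ Nat.card G) :
    ∀ a b : G, a * b = b * a := by
  by_contra hcon
  push_neg at hcon
  obtain ⟨x, y, hxy⟩ := hcon
  have hxy' : ¬ Commute x y := hxy
  have hx : x ≠ 1 := by rintro rfl; simp at hxy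
  have hy : y ≠ 1 := by rintro rfl; simp at hxy
  classical
  have hxyne : x * y ≠ 1 := by
    intro h1
    have : y = x⁻¹ := eq_inv_of_mul_eq_one_right h1
    exact hxy' (this ▸ (Commute.refl x).inv_right)
  -- order of nontrivial elements exceeds n, so power maps are injective on [1,n]
  have inj_pow : ∀ a : G, a ≠ 1 → Set.InjOn (a ^ ·) (Set.Iio (orderOf a)) :=
    fun a _ => pow_injOn_Iio_orderOf
  have card_pow : ∀ a : G, a ≠ 1 → ((Finset.Icc 1 n).image (a ^ ·)).card = n := by
    intro a ha
    rw [Finset.card_image_of_injOn, Nat.card_Icc]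
    · omega
    · intro i hi j hj hij
      simp only [Finset.coe_Icc, Set.mem_Icc] at hi hj
      have hord := ord_gt hp ha
      exact pow_injOn_Iio_orderOf (by simp; omega) (by simp; omega) hij
  -- The four sets
  set S0 : Finset G := (Finset.Icc 1 n).image (x ^ ·) with hS0
  set S1 : Finset G := (Finset.Icc 1 n).image (y ^ ·) with hS1
  set S2 : Finset G := (Finset.Icc 1 n).image ((x * y) ^ ·) with hS2
  set S3 : Finset G :=
    insert (x ^ 2 * y) ((Finset.Icc 2 n).image (fun k => x * y ^ k)) with hS3
  set X : Fin 4 → Finset G := ![S0, S1, S2, S3] with hX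
  have hcard : ∀ i, (X i).card = n := by
    intro i
    fin_cases i
    · exact card_pow x hx
    · exact card_pow y hy
    · exact card_pow (x * y) hxyne
    · show S3.card = n
      rw [hS3, Finset.card_insert_of_notMem, Finset.card_image_of_injOn, Nat.card_Icc]
      · omega
      · intro i hi j hj hij
        simp only [Finset.coe_Icc, Set.mem_Icc] at hi hj
        have : y ^ i = y ^ j := mul_left_cancel hij
        have hord := ord_gt hp hy
        exact pow_injOn_Iio_orderOf (x := y) (by simp; omega) (by simp; omega) this
      · simp only [Finset.mem_image, not_exists, Finset.mem_Icc, not_and]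
        rintro k hk heq
        apply hxy'
        have hxk : x = y ^ (k - 1) := by
          have h2 : x * (x * y) = x * (y ^ (k - 1) * y) := by
            rw [← mul_assoc, ← pow_two, ← heq, ← pow_succ,
              show k - 1 + 1 = k by omega]
          have := mul_left_cancel h2
          exact mul_right_cancel this
        rw [hxk]
        exact (Commute.refl y).pow_left (k - 1)
  obtain ⟨i, j, hij, u, hu, v, hv, huv⟩ := h X hcard
  -- the six cross-commutation impossibilities
  have K := key (n := n) hp
  have c01 : ∀ u ∈ S0, ∀ v ∈ S1, ¬ Commute u v := by
    rintro u hu v hv hc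
    simp only [hS0, hS1, Finset.mem_image, Finset.mem_Icc] at hu hv
    obtain ⟨a, ⟨ha1, ha2⟩, rfl⟩ := hu
    obtain ⟨b, ⟨hb1, hb2⟩, rfl⟩ := hv
    exact hxy' ((K y x hb1 hb2 (K x (y ^ b) ha1 ha2 hc).symm).symm)
  have c02 : ∀ u ∈ S0, ∀ v ∈ S2, ¬ Commute u v := by
    rintro u hu v hv hc
    simp only [hS0, hS2, Finset.mem_image, Finset.mem_Icc] at hu hv
    obtain ⟨a, ⟨ha1, ha2⟩, rfl⟩ := hu
    obtain ⟨b, ⟨hb1, hb2⟩, rfl⟩ := hv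
    have h1 : Commute x (x * y) := (K (x * y) x hb1 hb2 (K x _ ha1 ha2 hc).symm).symm
    exact hxy' (cancel_left (Commute.refl x) h1)
  have c12 : ∀ u ∈ S1, ∀ v ∈ S2, ¬ Commute u v := by
    rintro u hu v hv hc
    simp only [hS1, hS2, Finset.mem_image, Finset.mem_Icc] at hu hv
    obtain ⟨a, ⟨ha1, ha2⟩, rfl⟩ := hu
    obtain ⟨b, ⟨hb1, hb2⟩, rfl⟩ := hv
    have h1 : Commute y (x * y) := (K (x * y) y hb1 hb2 (K y _ ha1 ha2 hc).symm).symm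
    exact hxy' (cancel_right (Commute.refl y) h1).symm
  have mem3 : ∀ v ∈ S3, Commute x v → False := by
    intro v hv hc
    simp only [hS3, Finset.mem_insert, Finset.mem_image, Finset.mem_Icc] at hv
    rcases hv with rfl | ⟨k, ⟨hk1, hk2⟩, rfl⟩
    · exact hxy' (cancel_left ((Commute.refl x).pow_right 2) hc)
    · have h1 : Commute x (y ^ k) := cancel_left (Commute.refl x) hc
      exact hxy' ((K y x (by omega) hk2 h1.symm).symm)
  have c03 : ∀ u ∈ S0, ∀ v ∈ S3, ¬ Commute u v := by
    rintro u hu v hv hc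
    simp only [hS0, Finset.mem_image, Finset.mem_Icc] at hu
    obtain ⟨a, ⟨ha1, ha2⟩, rfl⟩ := hu
    exact mem3 v hv (K x v ha1 ha2 hc)
  have c13 : ∀ u ∈ S1, ∀ v ∈ S3, ¬ Commute u v := by
    rintro u hu v hv hc
    simp only [hS1, Finset.mem_image, Finset.mem_Icc] at hu
    obtain ⟨a, ⟨ha1, ha2⟩, rfl⟩ := hu
    have hc' : Commute y v := K y v ha1 ha2 hc
    simp only [hS3, Finset.mem_insert, Finset.mem_image, Finset.mem_Icc] at hv
    rcases hv with rfl | ⟨k, ⟨hk1, hk2⟩, rfl⟩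
    · have h1 : Commute y (x ^ 2) := cancel_right (Commute.refl y) hc'
      exact hxy' (K x y (i := 2) one_le_two hn h1.symm)
    · exact hxy' (cancel_right ((Commute.refl y).pow_right k) hc').symm
  have c23 : ∀ u ∈ S2, ∀ v ∈ S3, ¬ Commute u v := by
    rintro u hu v hv hc
    simp only [hS2, Finset.mem_image, Finset.mem_Icc] at hu
    obtain ⟨a, ⟨ha1, ha2⟩, rfl⟩ := hu
    have hc' : Commute (x * y) v := K (x * y) v ha1 ha2 hc
    simp only [hS3, Finset.mem_insert, Finset.mem_image, Finset.mem_Icc] at hv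
    rcases hv with rfl | ⟨k, ⟨hk1, hk2⟩, rfl⟩
    · have heq : x ^ 2 * y = x * (x * y) := by rw [← mul_assoc, ← pow_two]
      rw [heq] at hc'
      have h1 : Commute (x * y) x := cancel_right (Commute.refl (x * y)) hc'
      exact hxy' (cancel_left (Commute.refl x) h1.symm)
    · have heq : x * y ^ k = (x * y) * y ^ (k - 1) := by
        rw [mul_assoc, ← pow_succ']
        congr 2
        omega
      rw [heq] at hc'
      have h1 : Commute (x * y) (y ^ (k - 1)) := cancel_left (Commute.refl (x * y)) hc'
      have h2 : Commute y (x * y) := K y (x * y) (by omega) (by omega) h1.symm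
      exact hxy' (cancel_right (Commute.refl y) h2).symm
  -- case analysis on indices
  have main : ∀ u' v' : G, ∀ i' j' : Fin 4, i' < j' → u' ∈ X i' → v' ∈ X j' →
      ¬ Commute u' v' := by
    intro u' v' i' j' hlt hu' hv'
    fin_cases i' <;> fin_cases j' <;> simp_all only [hX] <;>
      first
      | exact absurd hlt (by decide)
      | exact c01 u' hu' v' hv'
      | exact c02 u' hu' v' hv'
      | exact c03 u' hu' v' hv'
      | exact c12 u' hu' v' hv'
      | exact c13 u' hu' v' hv'
      | exact c23 u' hu' v' hv'
  rcases lt_trichotomy i j with hlt | heq | hgt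
  · exact main u v i j hlt hu hv huv
  · exact hij heq
  · exact main v u j i hgt hv hu (Commute.symm huv)
end

section
/- Let G be a non-abelian group and n a positive integer such that every prime p ≤ n does not divide the order of any element of G (i.e., gcd(p,|G|)=1 for finite G). Then G contains a set of n+2 pairwise non-commuting elements, i.e., w(G) ≥ n+2; explicitly, if xy ≠ yx then {x, y, xy, xy², …, xyⁿ} is such a set. -/
theorem stmt_16 (G : Type*) [Group G] (n : ℕ) (hn : 1 ≤ n)
    (hG : ∃ a b : G, a * b ≠ b * a)
    (hp : ∀ p : ℕ, p.Prime → p ≤ n → ∀ g : G, ¬ p ∣ orderOf g) :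
    ∃ X : Finset G, X.card = n + 2 ∧
      ∀ x ∈ X, ∀ y ∈ X, x ≠ y → x * y ≠ y * x := by
  classical
  obtain ⟨x, y, hxy⟩ := hG
  -- key lemma: commuting with y^m for 1 ≤ m ≤ n gives commuting with y
  have key : ∀ m : ℕ, 1 ≤ m → m ≤ n → Commute x (y ^ m) → False := by
    intro m hm1 hmn hc
    apply hxy
    rcases eq_or_lt_of_le hm1 with h1 | h2
    · have : y ^ m = y := by rw [← h1, pow_one]
      rw [this] at hc; exact hc
    · -- m ≥ 2
      have hd0 : orderOf y ≠ 0 := by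
        intro h0
        have hpm : m.minFac.Prime := Nat.minFac_prime (by omega)
        exact hp m.minFac hpm (le_trans (Nat.minFac_le (by omega)) hmn) y
          (h0 ▸ dvd_zero _)
      have hcop : Nat.Coprime m (orderOf y) := by
        by_contra hnc
        set g := Nat.gcd m (orderOf y) with hg
        have hg2 : 2 ≤ g := by
          rcases Nat.eq_zero_or_pos g with h0 | hpos
          · exact absurd (Nat.eq_zero_of_gcd_eq_zero_right h0) hd0
          · omega
        have hpg : g.minFac.Prime := Nat.minFac_prime (by omega)
        have hdm : g.minFac ∣ m := dvd_trans (Nat.minFac_dvd g) (Nat.gcd_dvd_left _ _)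
        have hdo : g.minFac ∣ orderOf y := dvd_trans (Nat.minFac_dvd g) (Nat.gcd_dvd_right _ _)
        exact hp g.minFac hpg (le_trans (Nat.le_of_dvd (by omega) hdm) hmn) y hdo
      rcases Nat.lt_or_ge (orderOf y) 2 with hlt | hge
      · have hy1 : y = 1 := orderOf_eq_one_iff.mp (by omega)
        rw [hy1]; exact Commute.one_right x
      · obtain ⟨c, -, hc'⟩ := Nat.exists_mul_mod_eq_one_of_coprime hcop hge
        have hy : (y ^ m) ^ c = y := by
          rw [← pow_mul, ← pow_mod_orderOf, hc', pow_one]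
        have := (hc.pow_right c)
        rw [hy] at this
        exact this
  -- the family
  set f : ℕ → G := fun i => if i = 0 then x else if i = 1 then y else x * y ^ (i - 1)
    with hf
  have f0 : f 0 = x := rfl
  have f1 : f 1 = y := rfl
  have f2 : ∀ a : ℕ, f (a + 2) = x * y ^ (a + 1) := fun a => rfl
  -- pairwise noncommuting for i < j
  have hnc : ∀ i j : ℕ, i < j → j < n + 2 → f i * f j ≠ f j * f i := by
    intro i j hij hj heq
    match i, j with
    | 0, 1 =>
      rw [f0, f1] at heq; exact hxy heq
    | 0, (a+2) =>
      rw [f0, f2] at heq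
      rw [← mul_assoc] at heq
      have hcom : Commute x (y ^ (a + 1)) :=
        mul_left_cancel (a := x) (by rw [← mul_assoc, heq, mul_assoc])
      exact key (a + 1) (by omega) (by omega) hcom
    | 1, (a+2) =>
      rw [f1, f2] at heq
      have h1 : (y * x) * y ^ (a + 1) = (x * y) * y ^ (a + 1) := by
        calc (y * x) * y ^ (a + 1) = y * (x * y ^ (a + 1)) := by group
          _ = (x * y ^ (a + 1)) * y := heq
          _ = (x * y) * y ^ (a + 1) := by
              rw [mul_assoc, mul_assoc, ← pow_succ, ← pow_succ']
      exact hxy (mul_right_cancel h1).symm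
    | (a+2), (b+2) =>
      rw [f2, f2] at heq
      set d := b - a with hd
      have hb : b + 1 = (a + 1) + d := by omega
      have h1 : Commute (x * y ^ (a + 1)) (y ^ d) := by
        have : (x * y ^ (a+1)) * ((x * y ^ (a+1)) * y ^ d) =
            (x * y ^ (a+1)) * (y ^ d * (x * y ^ (a+1))) := by
          calc (x * y ^ (a+1)) * ((x * y ^ (a+1)) * y ^ d)
              = (x * y ^ (a+1)) * (x * y ^ (b+1)) := by
                rw [hb, pow_add]; group
            _ = (x * y ^ (b+1)) * (x * y ^ (a+1)) := heq
            _ = (x * y ^ (a+1)) * (y ^ d * (x * y ^ (a+1))) := by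
                rw [hb, pow_add, pow_add]; group
        exact mul_left_cancel this
      have h2 : Commute ((y ^ (a+1))⁻¹) (y ^ d) :=
        (((Commute.refl y).pow_pow (a+1) d)).inv_left
      have h3 : Commute x (y ^ d) := by
        have h4 := Commute.mul_left h1 h2
        rwa [mul_inv_cancel_right] at h4
      exact key d (by omega) (by omega) h3
  -- injectivity for i < j
  have hne : ∀ i j : ℕ, i < j → j < n + 2 → f i ≠ f j := by
    intro i j hij hj heq
    match i, j with
    | 0, 1 =>
      rw [f0, f1] at heq
      exact hxy (by rw [heq])
    | 0, (a+2) =>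
      rw [f0, f2] at heq
      have h1 : y ^ (a + 1) = 1 := by
        have : x * 1 = x * y ^ (a + 1) := by rw [mul_one, ← heq]
        exact (mul_left_cancel this).symm
      exact key (a + 1) (by omega) (by omega) (by rw [h1]; exact Commute.one_right x)
    | 1, (a+2) =>
      rw [f1, f2] at heq
      have hx : x = y * (y ^ (a + 1))⁻¹ := eq_mul_inv_of_mul_eq heq.symm
      have hcom : Commute x y := by
        rw [hx]
        exact Commute.mul_left (Commute.refl y) ((Commute.refl y).pow_left (a+1)).inv_left
      exact hxy hcom
    | (a+2), (b+2) =>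
      rw [f2, f2] at heq
      set d := b - a with hd
      have hb : b + 1 = (a + 1) + d := by omega
      have h1 : y ^ d = 1 := by
        have hpow : y ^ (a+1) * y ^ d = y ^ (b+1) := by rw [← pow_add, ← hb]
        have h2 : y ^ (a+1) * 1 = y ^ (a+1) * y ^ d := by
          rw [mul_one, hpow]
          exact mul_left_cancel heq
        exact (mul_left_cancel h2).symm
      exact key d (by omega) (by omega) (by rw [h1]; exact Commute.one_right x)
  refine ⟨(Finset.range (n + 2)).image f, ?_, ?_⟩
  · rw [Finset.card_image_of_injOn, Finset.card_range]
    intro i hi j hj hij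
    simp only [Finset.coe_range, Set.mem_Iio] at hi hj
    rcases lt_trichotomy i j with h | h | h
    · exact absurd hij (hne i j h hj)
    · exact h
    · exact absurd hij.symm (hne j i h hi)
  · intro u hu v hv huv
    simp only [Finset.mem_image, Finset.mem_range] at hu hv
    obtain ⟨i, hi, rfl⟩ := hu
    obtain ⟨j, hj, rfl⟩ := hv
    rcases lt_trichotomy i j with h | h | h
    · exact hnc i j h hj
    · exact absurd (by rw [h]) huv
    · intro heq
      exact hnc j i h hi heq.symm
end

section
/- If G is a non-abelian finite group and p is the smallest prime divisor of |G|, then w(G) ≥ p + 1. -/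
theorem stmt_17 (G : Type*) [Group G] [Finite G]
    (hG : ∃ a b : G, a * b ≠ b * a)
    (p : ℕ) (hp : p.Prime) (hpd : p ∣ Nat.card G)
    (hmin : ∀ q : ℕ, q.Prime → q ∣ Nat.card G → p ≤ q) :
    ∃ X : Finset G, X.card = p + 1 ∧
      ∀ x ∈ X, ∀ y ∈ X, x ≠ y → x * y ≠ y * x := by
  classical
  obtain ⟨a, b, hab⟩ := hG
  have hcard : 0 < Nat.card G := Nat.card_pos
  -- key: if a commutes with b^k for 0 < k < p, then a commutes with b
  have key : ∀ k : ℕ, 0 < k → k < p → a * b ^ k = b ^ k * a → False := by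
    intro k hk0 hkp hcomm
    have hco : k.Coprime (orderOf b) := by
      rw [Nat.coprime_comm]
      by_contra h
      set d := Nat.gcd (orderOf b) k with hd
      have hd1 : 1 < d := Nat.lt_of_le_of_ne (Nat.one_le_iff_ne_zero.2 (by
        intro h0
        have := Nat.eq_zero_of_gcd_eq_zero_right h0
        omega)) (Ne.symm h)
      have hq : d.minFac.Prime := Nat.minFac_prime (by omega)
      have hqd : d.minFac ∣ Nat.card G :=
        dvd_trans (dvd_trans (Nat.minFac_dvd d) (Nat.gcd_dvd_left _ _))
          (orderOf_dvd_natCard b)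
      have := hmin _ hq hqd
      have hqk : d.minFac ∣ k := dvd_trans (Nat.minFac_dvd d) (Nat.gcd_dvd_right _ _)
      have := Nat.le_of_dvd hk0 hqk
      omega
    obtain ⟨m, hm⟩ := exists_pow_eq_self_of_coprime hco
    apply hab
    have : Commute a (b ^ k) := hcomm
    have := (this.pow_right m)
    rw [hm] at this
    exact this
  -- b has order ≥ p (in fact orderOf b > k for all k < p used for distinctness)
  have hb1 : b ≠ 1 := by
    intro h; apply hab; rw [h, one_mul, mul_one]
  have hbo : p ≤ orderOf b := by
    have h1 : 1 < orderOf b := by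
      have h0 : 0 < orderOf b := orderOf_pos b
      have : orderOf b ≠ 1 := fun h => hb1 (orderOf_eq_one_iff.1 h)
      omega
    exact hmin _ (Nat.minFac_prime (by omega)) (dvd_trans (Nat.minFac_dvd _) (orderOf_dvd_natCard b)) |>.trans (Nat.minFac_le (by omega))
  -- b never commutes with a * b^i
  have keyb : ∀ i : ℕ, b * (a * b ^ i) = (a * b ^ i) * b → False := by
    intro i heq
    have h2 : Commute b (a * b ^ i) := heq
    have h3 : Commute b (b ^ i) := (Commute.refl b).pow_right i
    have h4 : Commute b ((a * b ^ i) * (b ^ i)⁻¹) := h2.mul_right h3.inv_right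
    rw [mul_assoc, mul_inv_cancel, mul_one] at h4
    exact hab h4.symm.eq
  -- a*b^i and a*b^j never commute for i < j < p
  have helper : ∀ i j : ℕ, i < j → j < p →
      (a * b ^ i) * (a * b ^ j) = (a * b ^ j) * (a * b ^ i) → False := by
    intro i j hij hjp heq
    set k := j - i with hk
    set c := a * b ^ i with hc
    have hik : i + k = j := by omega
    have hj : a * b ^ j = c * b ^ k := by rw [hc, mul_assoc, ← pow_add, hik]
    rw [hj] at heq
    rw [mul_assoc c (b ^ k) c] at heq
    have h2 : Commute c (b ^ k) := mul_left_cancel heq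
    have h3 : Commute (b ^ i) (b ^ k) := Commute.pow_pow_self b i k
    have h4 : Commute (c * (b ^ i)⁻¹) (b ^ k) := h2.mul_left h3.inv_left
    rw [hc, mul_assoc, mul_inv_cancel, mul_one] at h4
    exact key k (by omega) (by omega) h4.eq
  refine ⟨insert b ((Finset.range p).image (fun i => a * b ^ i)), ?_, ?_⟩
  · have hinj : Set.InjOn (fun i => a * b ^ i) (Finset.range p) := by
      intro i hi j hj hfij
      simp only [Finset.coe_range, Set.mem_Iio] at hi hj
      by_contra hne
      rcases Nat.lt_or_ge i j with h | h
      · have hbij : b ^ i = b ^ j := mul_left_cancel hfij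
        have hb : b ^ i * b ^ (j - i) = b ^ i * 1 := by
          rw [mul_one, ← pow_add, show i + (j - i) = j by omega]; exact hbij.symm
        have : b ^ (j - i) = 1 := mul_left_cancel hb
        have := Nat.le_of_dvd (by omega) (orderOf_dvd_iff_pow_eq_one.2 this)
        omega
      · have hlt : j < i := by omega
        have hbij : b ^ i = b ^ j := mul_left_cancel hfij
        have hb : b ^ j * b ^ (i - j) = b ^ j * 1 := by
          rw [mul_one, ← pow_add, show j + (i - j) = i by omega]
          exact hbij
        have : b ^ (i - j) = 1 := mul_left_cancel hb
        have := Nat.le_of_dvd (by omega) (orderOf_dvd_iff_pow_eq_one.2 this)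
        omega
    have hbnot : b ∉ (Finset.range p).image (fun i => a * b ^ i) := by
      intro hmem
      obtain ⟨i, _, hi⟩ := Finset.mem_image.1 hmem
      exact keyb i (by rw [hi])
    rw [Finset.card_insert_of_notMem hbnot, Finset.card_image_of_injOn hinj,
      Finset.card_range]
  · intro x hx y hy hne heq
    rcases Finset.mem_insert.1 hx with hxb | hxi <;>
      rcases Finset.mem_insert.1 hy with hyb | hyi
    · exact hne (hxb.trans hyb.symm)
    · obtain ⟨j, _, hj⟩ := Finset.mem_image.1 hyi
      exact keyb j (by rw [hj, ← hxb]; exact heq)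
    · obtain ⟨i, _, hi⟩ := Finset.mem_image.1 hxi
      exact keyb i (by rw [hi, ← hyb]; exact heq.symm)
    · obtain ⟨i, hi', hi⟩ := Finset.mem_image.1 hxi
      obtain ⟨j, hj', hj⟩ := Finset.mem_image.1 hyi
      simp only [Finset.mem_range] at hi' hj'
      rcases lt_trichotomy i j with h | h | h
      · exact helper i j h hj' (by rw [hi, hj]; exact heq)
      · exact hne (by rw [← hi, ← hj, h])
      · exact helper j i h hi' (by rw [hi, hj]; exact heq.symm)
end

section
/- Let G be a T(m,n)-group with m ≥ 2, n > 1, and let N be a proper non-trivial normal subgroup of G. Then for every positive integer t with 2t ≤ n, the quotient G/N is a T(m, n−t)-group. -/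
theorem stmt_18 (G : Type*) [Group G] (m n t : ℕ) (hm : 2 ≤ m) (hn : 1 < n)
    (h : IsTGroup G m n) (N : Subgroup G) [N.Normal]
    (hbot : N ≠ ⊥) (htop : N ≠ ⊤) (ht : 1 ≤ t) (htn : 2 * t ≤ n) :
    IsTGroup (G ⧸ N) m (n - t) := by
  classical
  obtain ⟨a, haN, ha1⟩ : ∃ a ∈ N, a ≠ 1 := by
    by_contra hc
    push_neg at hc
    exact hbot (le_antisymm (fun x hx => hc x hx) bot_le)
  have hamk : (a : G ⧸ N) = 1 := (QuotientGroup.eq_one_iff a).2 haN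
  intro Y hY
  set S : Fin m → Finset G := fun i => (Y i).image Quotient.out with hS
  have houtinj : Function.Injective (Quotient.out : G ⧸ N → G) := by
    intro u v huv
    rw [← QuotientGroup.out_eq' u, ← QuotientGroup.out_eq' v, huv]
  have hScard : ∀ i, (S i).card = n - t := by
    intro i
    rw [hS]
    rw [Finset.card_image_of_injective _ houtinj, hY]
  have hSmk : ∀ i, ∀ s ∈ S i, (↑s : G ⧸ N) ∈ Y i := by
    intro i s hs
    simp only [hS, Finset.mem_image] at hs
    obtain ⟨u, hu, rfl⟩ := hs
    simpa [QuotientGroup.out_eq'] using hu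
  have hSinj : ∀ i, ∀ z ∈ S i, ∀ s ∈ S i, (↑z : G ⧸ N) = ↑s → z = s := by
    intro i z hz s hs hzs
    simp only [hS, Finset.mem_image] at hz hs
    obtain ⟨u, hu, rfl⟩ := hz
    obtain ⟨v, hv, rfl⟩ := hs
    rw [QuotientGroup.out_eq', QuotientGroup.out_eq'] at hzs
    rw [hzs]
  have htle : t ≤ n - t := by omega
  choose T hTsub hTcard using fun i => (Finset.exists_subset_card_eq (by rw [hScard]; exact htle) : ∃ u ⊆ S i, u.card = t)
  set X : Fin m → Finset G := fun i => S i ∪ (T i).image (fun g => a * g) with hX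
  have hdisj : ∀ i, Disjoint (S i) ((T i).image (fun g => a * g)) := by
    intro i
    rw [Finset.disjoint_right]
    intro z hz hzS
    simp only [Finset.mem_image] at hz
    obtain ⟨s, hsT, rfl⟩ := hz
    have hsS : s ∈ S i := hTsub i hsT
    have : ((a * s : G) : G ⧸ N) = (s : G ⧸ N) := by
      rw [QuotientGroup.mk_mul, hamk, one_mul]
    have := hSinj i _ hzS _ hsS this
    exact ha1 (by
      have : a * s = 1 * s := by rw [this, one_mul]
      exact mul_right_cancel this)
  have hXcard : ∀ i, (X i).card = n := by
    intro i
    rw [hX]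
    rw [Finset.card_union_of_disjoint (hdisj i),
      Finset.card_image_of_injective _ (mul_right_injective a), hScard, hTcard]
    omega
  have hXmk : ∀ i, ∀ x ∈ X i, (↑x : G ⧸ N) ∈ Y i := by
    intro i x hx
    rw [hX, Finset.mem_union] at hx
    rcases hx with hx | hx
    · exact hSmk i x hx
    · simp only [Finset.mem_image] at hx
      obtain ⟨s, hsT, rfl⟩ := hx
      rw [QuotientGroup.mk_mul, hamk, one_mul]
      exact hSmk i s (hTsub i hsT)
  obtain ⟨i, j, hij, x, hx, y, hy, hcomm⟩ := h X hXcard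
  refine ⟨i, j, hij, x, hXmk i x hx, y, hXmk j y hy, ?_⟩
  rw [← QuotientGroup.mk_mul, ← QuotientGroup.mk_mul, hcomm]
end
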